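/- Let M be a number field, 𝔩 a degree-one prime of M above a rational prime l, unramified in M/ℚ, and let ε be a unit of the ring of integers of M(μ_l), where μ_l are the l-th roots of unity. Then the norm N_{M(μ_l)/M}(ε) is congruent to 1 modulo 𝔩. -/

import Mathlib

open NumberField Ideal UniqueFactorizationMonoid

lemma aux_le_ramificationIdx {R S : Type*} [CommRing R] [CommRing S] [Algebra R S]
    [IsDedekindDomain S]
    (p : Ideal R) (P : Ideal S) (hP : P.IsPrime) (hP0 : P ≠ ⊥)
    (hp0 : Ideal.map (algebraMap R S) p ≠ ⊥) {n : ℕ} (h : Ideal.map (algebraMap R S) p ≤ P ^ n) :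
    n ≤ Ideal.ramificationIdx' p P := by
  classical
  rw [Ideal.IsDedekindDomain.ramificationIdx'_eq_normalizedFactors_count hp0 hP hP0]
  have hPirr := (Ideal.prime_of_isPrime hP0 hP).irreducible
  have hdvd : P ^ n ∣ Ideal.map (algebraMap R S) p := Ideal.dvd_iff_le.mpr h
  rwa [UniqueFactorizationMonoid.dvd_iff_normalizedFactors_le_normalizedFactors
      (pow_ne_zero _ hP0) hp0, UniqueFactorizationMonoid.normalizedFactors_pow,
      UniqueFactorizationMonoid.normalizedFactors_irreducible hPirr, normalize_eq,
      Multiset.nsmul_singleton, ← Multiset.le_count_iff_replicate_le] at hdvd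

lemma aux_prod_mem_pow {S : Type*} [CommRing S] (I : Ideal S) {ι : Type*} (s : Finset ι)
    (g : ι → S) (h : ∀ i ∈ s, g i ∈ I) : ∏ i ∈ s, g i ∈ I ^ s.card := by
  classical
  induction s using Finset.induction_on with
  | empty => simp
  | @insert a s hx ih =>
    rw [Finset.prod_insert hx, Finset.card_insert_of_notMem hx, pow_succ, mul_comm]
    exact Ideal.mul_mem_mul (h a (Finset.mem_insert_self a s))
      (ih fun i hi => h i (Finset.mem_insert_of_mem hi))


set_option maxHeartbeats 1000000 in
set_option synthInstance.maxHeartbeats 400000 in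
/-- Let `M` be a number field, `l` a prime number, `𝔩` a degree-one prime of `M` above `l`
which is unramified in `M/ℚ`, and `L = M(μ_l)` the `l`-th cyclotomic extension of `M`.
Then for every unit `ε` of the ring of integers of `L`, the norm `N_{L/M}(ε)` is congruent
to `1` modulo `𝔩`. -/
theorem norm_unit_congr_one (M L : Type*) [Field M] [NumberField M] [Field L]
    [NumberField L] [Algebra M L] (l : ℕ) (hl : l.Prime)
    [IsCyclotomicExtension {l} M L]
    (𝔩 : Ideal (𝓞 M)) (hprime : 𝔩.IsPrime) (hl𝔩 : (l : 𝓞 M) ∈ 𝔩)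
    (hdeg : Ideal.absNorm 𝔩 = l)
    (hunram : Ideal.ramificationIdx' (Ideal.span {(l : ℤ)}) 𝔩 = 1)
    (ε : (𝓞 L)ˣ) :
    RingOfIntegers.norm M (ε : 𝓞 L) - 1 ∈ 𝔩 := by
  classical
  haveI : Fact l.Prime := ⟨hl⟩
  haveI : NeZero l := ⟨hl.ne_zero⟩
  haveI := IsCyclotomicExtension.isGalois {l} M L
  obtain ⟨ζ, hζ⟩ := IsCyclotomicExtension.exists_isPrimitiveRoot M L (Set.mem_singleton l) hl.ne_zero
  set ζi : 𝓞 L := hζ.toInteger with hζidef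
  have hζil : IsPrimitiveRoot ζi l := hζ.toInteger_isPrimitiveRoot
  -- basic facts about 𝔩
  have hlne0 : (l : 𝓞 M) ≠ 0 := Nat.cast_ne_zero.mpr hl.ne_zero
  have h𝔩ne : 𝔩 ≠ ⊥ := fun h => hlne0 (by simpa [h] using hl𝔩)
  haveI h𝔩max : 𝔩.IsMaximal := Ideal.IsPrime.isMaximal hprime h𝔩ne
  have hinj : Function.Injective (algebraMap (𝓞 M) (𝓞 L)) :=
    FaithfulSMul.algebraMap_injective _ _
  -- a prime above 𝔩
  obtain ⟨𝔏, -, h𝔏prime, h𝔏comap⟩ :=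
    Ideal.exists_ideal_over_prime_of_isIntegral (S := 𝓞 L) 𝔩 ⊥
      (by rw [← RingHom.ker_eq_comap_bot, (RingHom.injective_iff_ker_eq_bot _).mp hinj]
          exact bot_le)
  haveI := h𝔏prime
  haveI h𝔏lies : 𝔏.LiesOver 𝔩 := ⟨h𝔏comap.symm⟩
  have h𝔏ne : 𝔏 ≠ ⊥ := by
    rintro rfl
    rw [← h𝔏comap, ← RingHom.ker_eq_comap_bot,
      (RingHom.injective_iff_ker_eq_bot _).mp hinj] at h𝔩ne
    exact h𝔩ne rfl
  haveI h𝔏max : 𝔏.IsMaximal := Ideal.IsPrime.isMaximal h𝔏prime h𝔏ne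
  set q : 𝓞 L →+* 𝓞 L ⧸ 𝔏 := Ideal.Quotient.mk 𝔏 with hq
  have hl𝔏 : (l : 𝓞 L) ∈ 𝔏 := by
    have h1 : (l : 𝓞 M) ∈ Ideal.comap (algebraMap (𝓞 M) (𝓞 L)) 𝔏 := h𝔏comap ▸ hl𝔩
    have h2 : algebraMap (𝓞 M) (𝓞 L) (l : 𝓞 M) ∈ 𝔏 := h1
    simpa using h2
  have hlF : (l : 𝓞 L ⧸ 𝔏) = 0 := by
    rw [show ((l : 𝓞 L ⧸ 𝔏)) = q (l : 𝓞 L) by push_cast; rfl, hq,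
      Ideal.Quotient.eq_zero_iff_mem]
    exact hl𝔏
  haveI hcharF : CharP (𝓞 L ⧸ 𝔏) l := by
    have hdvd : ringChar (𝓞 L ⧸ 𝔏) ∣ l := ringChar.dvd hlF
    have : ringChar (𝓞 L ⧸ 𝔏) = l := by
      rcases hl.eq_one_or_self_of_dvd _ hdvd with h | h
      · exact absurd h CharP.ringChar_ne_one
      · exact h
    exact this ▸ ringChar.charP _
  -- ζ ≡ 1 mod 𝔏
  have hζbar : q ζi = 1 := by
    have hfrob : (q ζi - 1) ^ l = 0 := by
      rw [sub_pow_char, one_pow, ← map_pow,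
        show ζi ^ l = 1 from hζil.pow_eq_one, map_one, sub_self]
    have h0 := pow_eq_zero_iff hl.ne_zero |>.mp hfrob
    exact sub_eq_zero.mp h0
  -- l = ∏ (1 - ζ^k), hence l ∈ 𝔏 ^ (l - 1)
  have hζil' : IsPrimitiveRoot ζi ((l - 1) + 1) := by
    rwa [Nat.sub_add_cancel hl.pos]
  have hprod : ∏ k ∈ Finset.range (l - 1), (1 - ζi ^ (k + 1)) = (l : 𝓞 L) := by
    rw [hζil'.prod_one_sub_pow_eq_order]
    push_cast [Nat.cast_sub hl.one_lt.le]
    ring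
  have hlpow : (l : 𝓞 L) ∈ 𝔏 ^ (l - 1) := by
    rw [← hprod]
    have := aux_prod_mem_pow 𝔏 (Finset.range (l - 1)) (fun k => 1 - ζi ^ (k + 1)) ?_
    · simpa using this
    · intro k _
      rw [← Ideal.Quotient.eq_zero_iff_mem]
      show q _ = 0
      rw [map_sub, map_one, map_pow, hζbar, one_pow, sub_self]
  -- lower bound for the ramification index over ℤ
  have hmapspan : Ideal.map (algebraMap ℤ (𝓞 L)) (Ideal.span {(l : ℤ)}) =
      Ideal.span {(l : 𝓞 L)} := by
    rw [Ideal.map_span, Set.image_singleton, map_natCast]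
  have hfg : Ideal.map (algebraMap ℤ (𝓞 L)) (Ideal.span {(l : ℤ)}) ≠ ⊥ := by
    rw [hmapspan, Ne, Ideal.span_singleton_eq_bot]
    exact_mod_cast hl.ne_zero
  have h1 : l - 1 ≤ Ideal.ramificationIdx' (Ideal.span {(l : ℤ)}) 𝔏 := by
    refine aux_le_ramificationIdx _ _ h𝔏prime h𝔏ne hfg ?_
    rw [hmapspan, Ideal.span_le, Set.singleton_subset_iff]
    exact hlpow
  -- tower multiplicativity
  have hg : Ideal.map (algebraMap (𝓞 M) (𝓞 L)) 𝔩 ≤ 𝔏 :=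
    Ideal.map_le_iff_le_comap.mpr (le_of_eq h𝔏comap.symm)
  have hg0 : Ideal.map (algebraMap (𝓞 M) (𝓞 L)) 𝔩 ≠ ⊥ := by
    rw [Ne, Ideal.map_eq_bot_iff_le_ker, (RingHom.injective_iff_ker_eq_bot _).mp hinj,
      le_bot_iff]
    exact h𝔩ne
  set e := Ideal.ramificationIdx' 𝔩 𝔏 with he
  set f := Ideal.inertiaDeg' 𝔩 𝔏 with hf
  have htower : Ideal.ramificationIdx' (Ideal.span {(l : ℤ)}) 𝔏 =
      Ideal.ramificationIdx' (Ideal.span {(l : ℤ)}) 𝔩 * e :=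
    Ideal.ramificationIdx'_algebra_tower hg0 hfg hg
  have he_low : l - 1 ≤ e := by
    rwa [htower, hunram, one_mul] at h1
  -- upper bound on the degree
  have hcardgal : Fintype.card (L ≃ₐ[M] L) = Module.finrank M L :=
    by rw [← Nat.card_eq_fintype_card]; exact IsGalois.card_aut_eq_finrank M L
  have hfr_le : Module.finrank M L ≤ l - 1 := by
    rw [← hcardgal]
    calc Fintype.card (L ≃ₐ[M] L) ≤ Fintype.card (ZMod l)ˣ :=
          Fintype.card_le_of_injective _ (hζ.autToPow_injective M)
      _ = l - 1 := by rw [ZMod.card_units_eq_totient, Nat.totient_prime hl]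
  -- the fundamental identity ∑ e f = [L : M]
  set T := (factors (Ideal.map (algebraMap (𝓞 M) (𝓞 L)) 𝔩)).toFinset with hT
  set term : Ideal (𝓞 L) → ℕ := fun P =>
    Ideal.ramificationIdx' 𝔩 P *
      Ideal.inertiaDeg' 𝔩 P with hterm
  have hsum : (∑ P ∈ T, term P) = Module.finrank M L :=
    Ideal.sum_ramification_inertia (S := 𝓞 L) (p := 𝔩) M L h𝔩ne
  have hmem_T : ∀ Q : Ideal (𝓞 L), Q ∈ T ↔
      Q.IsPrime ∧ Ideal.map (algebraMap (𝓞 M) (𝓞 L)) 𝔩 ≤ Q := by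
    intro Q
    rw [hT, Multiset.mem_toFinset, factors_eq_normalizedFactors,
      Ideal.mem_normalizedFactors_iff hg0]
  have hmem𝔏 : 𝔏 ∈ T := (hmem_T 𝔏).mpr ⟨h𝔏prime, hg⟩
  have hterm_pos : ∀ Q ∈ T, 0 < term Q := by
    intro Q hQ
    obtain ⟨hQp, hQle⟩ := (hmem_T Q).mp hQ
    haveI := hQp
    have hQcomap : Ideal.comap (algebraMap (𝓞 M) (𝓞 L)) Q = 𝔩 := by
      refine (h𝔩max.eq_of_le ?_ (Ideal.map_le_iff_le_comap.mp hQle)).symm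
      intro htop
      apply hQp.ne_top
      rw [Ideal.eq_top_iff_one]
      have h1 : (1 : 𝓞 M) ∈ Ideal.comap (algebraMap (𝓞 M) (𝓞 L)) Q := htop ▸ trivial
      simpa using h1
    haveI : Q.LiesOver 𝔩 := ⟨hQcomap.symm⟩
    have hfQ := Ideal.inertiaDeg'_pos 𝔩 Q
    have heQ := Ideal.IsDedekindDomain.ramificationIdx'_ne_zero hg0 hQp hQle
    exact Nat.mul_pos (Nat.pos_of_ne_zero heQ) hfQ
  have hfpos : 0 < f := Ideal.inertiaDeg'_pos 𝔩 𝔏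
  have hterm𝔏' : term 𝔏 = e * f := rfl
  have h_ef_le : e * f ≤ l - 1 := by
    calc e * f = term 𝔏 := hterm𝔏'.symm
      _ ≤ ∑ P ∈ T, term P :=
          Finset.single_le_sum (fun P _ => Nat.zero_le _) hmem𝔏
      _ = Module.finrank M L := hsum
      _ ≤ l - 1 := hfr_le
  have he_eq : e = l - 1 :=
    le_antisymm ((Nat.le_mul_of_pos_right e hfpos).trans h_ef_le) he_low
  have hf_eq : f = 1 := by
    have hl2 := hl.two_le
    have h2 : e * f ≤ e * 1 := by rw [mul_one]; exact h_ef_le.trans he_low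
    have hepos : 0 < e := lt_of_lt_of_le (by omega : 0 < l - 1) he_low
    have := Nat.le_of_mul_le_mul_left h2 hepos
    omega
  have hterm𝔏 : term 𝔏 = l - 1 := by rw [hterm𝔏', he_eq, hf_eq, mul_one]
  have hsum_eq : (∑ P ∈ T, term P) = l - 1 := by
    refine le_antisymm (hsum ▸ hfr_le) ?_
    rw [← hterm𝔏]
    exact Finset.single_le_sum (fun P _ => Nat.zero_le _) hmem𝔏
  have hT_single : T = {𝔏} := by
    refine Finset.eq_singleton_iff_unique_mem.mpr ⟨hmem𝔏, ?_⟩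
    intro Q hQ
    by_contra hne
    have hQmem' : Q ∈ T.erase 𝔏 := Finset.mem_erase.mpr ⟨hne, hQ⟩
    have h3 : term Q ≤ ∑ P ∈ T.erase 𝔏, term P :=
      Finset.single_le_sum (fun P _ => Nat.zero_le _) hQmem'
    have h4 : term 𝔏 + ∑ P ∈ T.erase 𝔏, term P = ∑ P ∈ T, term P :=
      Finset.add_sum_erase T term hmem𝔏
    have h5 := hterm_pos Q hQ
    omega
  -- the residue field has cardinality l
  have hf1 : Module.finrank (𝓞 M ⧸ 𝔩) (𝓞 L ⧸ 𝔏) = 1 := by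
    rw [← Ideal.inertiaDeg'_algebraMap 𝔩 𝔏]
    exact hf_eq
  haveI hfinM : Finite (𝓞 M ⧸ 𝔩) :=
    (Ideal.absNorm_ne_zero_iff 𝔩).mp (by rw [hdeg]; exact hl.ne_zero)
  haveI hfinL : Finite (𝓞 L ⧸ 𝔏) := by
    refine (Ideal.absNorm_ne_zero_iff 𝔏).mp ?_
    refine Ideal.absNorm_ne_zero_iff_mem_nonZeroDivisors.mpr ?_
    refine mem_nonZeroDivisors_iff_ne_zero.mpr ?_
    simpa [Submodule.zero_eq_bot] using h𝔏ne
  letI : Fintype (𝓞 M ⧸ 𝔩) := Fintype.ofFinite _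
  letI : Fintype (𝓞 L ⧸ 𝔏) := Fintype.ofFinite _
  have hcardM : Fintype.card (𝓞 M ⧸ 𝔩) = l := by
    rw [← Nat.card_eq_fintype_card, ← Submodule.cardQuot_apply, ← Ideal.absNorm_apply, hdeg]
  letI : Field (𝓞 M ⧸ 𝔩) := Ideal.Quotient.field 𝔩
  have hcardF : Fintype.card (𝓞 L ⧸ 𝔏) = l := by
    have hc := Module.card_eq_pow_finrank (K := 𝓞 M ⧸ 𝔩) (V := 𝓞 L ⧸ 𝔏)
    rw [hf1, pow_one, hcardM] at hc
    exact hc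
  -- Galois automorphisms act trivially modulo 𝔏
  have hfix : ∀ (σ : L ≃ₐ[M] L) (x : 𝓞 L),
      q (galRestrict (𝓞 M) M L (𝓞 L) σ x) = q x := by
    intro σ x
    set σ' : 𝓞 L ≃ₐ[𝓞 M] 𝓞 L := galRestrict (𝓞 M) M L (𝓞 L) σ with hσ'
    have hcom : Ideal.comap (σ' : 𝓞 L →+* 𝓞 L) 𝔏 = 𝔏 := by
      have hQp : (Ideal.comap (σ' : 𝓞 L →+* 𝓞 L) 𝔏).IsPrime := Ideal.IsPrime.comap _
      have hle : Ideal.map (algebraMap (𝓞 M) (𝓞 L)) 𝔩 ≤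
          Ideal.comap (σ' : 𝓞 L →+* 𝓞 L) 𝔏 := by
        rw [Ideal.map_le_iff_le_comap, Ideal.comap_comap]
        intro a ha
        have h1 : (σ' : 𝓞 L →+* 𝓞 L) (algebraMap (𝓞 M) (𝓞 L) a) ∈ 𝔏 := by
          rw [show (σ' : 𝓞 L →+* 𝓞 L) (algebraMap (𝓞 M) (𝓞 L) a) =
            algebraMap (𝓞 M) (𝓞 L) a from σ'.commutes a]
          exact hg (Ideal.mem_map_of_mem _ ha)
        exact h1
      have hmem : Ideal.comap (σ' : 𝓞 L →+* 𝓞 L) 𝔏 ∈ T := (hmem_T _).mpr ⟨hQp, hle⟩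
      rw [hT_single, Finset.mem_singleton] at hmem
      exact hmem
    have hker : ∀ a ∈ 𝔏, (q.comp (σ' : 𝓞 L →+* 𝓞 L)) a = 0 := by
      intro a ha
      have h2 : (σ' : 𝓞 L →+* 𝓞 L) a ∈ 𝔏 := by rw [← hcom] at ha; exact ha
      simpa [hq, Ideal.Quotient.eq_zero_iff_mem] using h2
    set φ : 𝓞 L ⧸ 𝔏 →+* 𝓞 L ⧸ 𝔏 :=
      Ideal.Quotient.lift 𝔏 (q.comp (σ' : 𝓞 L →+* 𝓞 L)) hker with hφdef
    have hφ : ∀ y : 𝓞 L ⧸ 𝔏, φ y = y := by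
      have hsurj : Function.Surjective (ZMod.castHom (dvd_refl l) (𝓞 L ⧸ 𝔏)) :=
        (ZMod.castHom_bijective _ hcardF).2
      intro y
      obtain ⟨k, rfl⟩ := hsurj y
      have heq : φ.comp (ZMod.castHom (dvd_refl l) (𝓞 L ⧸ 𝔏)) =
          ZMod.castHom (dvd_refl l) (𝓞 L ⧸ 𝔏) := Subsingleton.elim _ _
      calc φ (ZMod.castHom (dvd_refl l) (𝓞 L ⧸ 𝔏) k)
          = (φ.comp (ZMod.castHom (dvd_refl l) (𝓞 L ⧸ 𝔏))) k := rfl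
        _ = ZMod.castHom (dvd_refl l) (𝓞 L ⧸ 𝔏) k := by rw [heq]
    have h3 : φ (q x) = q ((σ' : 𝓞 L →+* 𝓞 L) x) := Ideal.Quotient.lift_mk 𝔏 _ _
    have h4 : q (σ' x) = φ (q x) := h3.symm
    rw [h4, hφ]
  -- the norm as a product over the Galois group
  have hNorm : algebraMap (𝓞 M) (𝓞 L) (RingOfIntegers.norm M (ε : 𝓞 L)) =
      ∏ σ : L ≃ₐ[M] L, galRestrict (𝓞 M) M L (𝓞 L) σ (ε : 𝓞 L) := by
    rw [← RingOfIntegers.eq_iff, RingOfIntegers.coe_algebraMap_norm,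
      Algebra.norm_eq_prod_automorphisms]
    show _ = algebraMap (𝓞 L) L (∏ σ : L ≃ₐ[M] L, galRestrict (𝓞 M) M L (𝓞 L) σ (ε : 𝓞 L))
    rw [map_prod]
    exact Finset.prod_congr rfl fun σ _ =>
      (algebraMap_galRestrict_apply (𝓞 M) σ (ε : 𝓞 L)).symm
  have hfr_eq : Module.finrank M L = l - 1 := by rw [← hsum, hsum_eq]
  have hcard_aut : Fintype.card (L ≃ₐ[M] L) = l - 1 := by rw [hcardgal, hfr_eq]
  -- ε mod 𝔏 has (l-1)-st power equal to 1
  have hqeps : q (ε : 𝓞 L) ^ (l - 1) = 1 := by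
    have hne : q (ε : 𝓞 L) ≠ 0 := by
      intro h0
      have hu : IsUnit (q (ε : 𝓞 L)) := (Units.isUnit ε).map q
      rw [h0] at hu
      exact not_isUnit_zero hu
    obtain ⟨k, hk⟩ := (ZMod.castHom_bijective _ hcardF).2 (q (ε : 𝓞 L))
    have hkne : k ≠ 0 := by
      rintro rfl
      rw [map_zero] at hk
      exact hne hk.symm
    rw [← hk, ← map_pow, ZMod.pow_card_sub_one_eq_one hkne, map_one]
  have hmain : q (algebraMap (𝓞 M) (𝓞 L) (RingOfIntegers.norm M (ε : 𝓞 L))) = 1 := by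
    rw [hNorm, map_prod]
    rw [Finset.prod_congr rfl (fun σ _ => hfix σ (ε : 𝓞 L)), Finset.prod_const,
      Finset.card_univ, hcard_aut, hqeps]
  have hfin : algebraMap (𝓞 M) (𝓞 L) (RingOfIntegers.norm M (ε : 𝓞 L) - 1) ∈ 𝔏 := by
    rw [← Ideal.Quotient.eq_zero_iff_mem]
    show q _ = 0
    simp only [map_sub, map_one]
    rw [hmain, sub_self]
  rw [← h𝔏comap]
  exact Ideal.mem_comap.mpr hfin
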